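/- Let x and y be finite words over a linearly ordered alphabet such that the finite word xy² is a Lyndon word. Then the infinite word x·y^ω (x followed by infinitely many copies of y) is lexicographically less than or equal to every proper suffix of itself. -/

import Mathlib

/-- A finite word is a Lyndon word if it is nonempty and lexicographically
strictly smaller than all of its proper nonempty suffixes. -/
def IsLyndon {A : Type*} [LinearOrder A] (w : List A) : Prop :=
  w ≠ [] ∧ ∀ i : ℕ, 0 < i → i < w.length → w < w.drop i

/-- Lexicographic (non-strict) order on infinite words. -/
def InfLe {A : Type*} [LinearOrder A] (w z : ℕ → A) : Prop :=
  w = z ∨ ∃ n : ℕ, (∀ m < n, w m = z m) ∧ w n < z n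

/-- Extract the first difference from a lexicographic comparison. -/
lemma lex_first_diff {A : Type*} [LinearOrder A] {a b : List A}
    (hab : List.Lex (· < ·) a b) :
    (∃ i : ℕ, (∀ j < i, a[j]? = b[j]?) ∧
      ∃ p q, a[i]? = some p ∧ b[i]? = some q ∧ p < q) ∨ a <+: b := by
  induction hab with
  | nil => right; exact List.nil_prefix
  | @rel c l₁ d l₂ hcd =>
      left
      exact ⟨0, fun j hj => absurd hj (Nat.not_lt_zero j), c, d, rfl, rfl, hcd⟩
  | @cons c l₁ l₂ _ ih =>
      rcases ih with ⟨i, hagree, p, q, hp, hq, hpq⟩ | hpre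
      · left
        refine ⟨i + 1, ?_, p, q, hp, hq, hpq⟩
        intro j hj
        cases j with
        | zero => rfl
        | succ j' => exact hagree j' (Nat.lt_of_succ_lt_succ hj)
      · right
        exact List.cons_prefix_cons.mpr ⟨rfl, hpre⟩

theorem lyndon_xyy_periodic_le_suffixes {A : Type*} [LinearOrder A]
    (x y : List A) (hy : y ≠ [])
    (h : IsLyndon (x ++ y ++ y)) (w : ℕ → A)
    (hw : ∀ n : ℕ,
      (∀ hn : n < x.length, w n = x.get ⟨n, hn⟩) ∧
      (x.length ≤ n →
        w n = y.get ⟨(n - x.length) % y.length,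
          Nat.mod_lt _ (List.length_pos_of_ne_nil hy)⟩)) :
    ∀ k : ℕ, 1 ≤ k → InfLe w (fun n => w (n + k)) := by
  have hylen : 0 < y.length := List.length_pos_iff.mpr hy
  set u : List A := x ++ y ++ y with hu
  have hL : u.length = x.length + 2 * y.length := by
    simp [hu, List.length_append]; ring
  -- w agrees with u on the first |u| positions
  have hwu : ∀ n (hn : n < u.length), w n = u.get ⟨n, hn⟩ := by
    intro n hn
    rw [hL] at hn
    rcases lt_or_ge n x.length with hnx | hnx
    · have := (hw n).1 hnx
      rw [this]
      show x.get ⟨n, hnx⟩ = u.get _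
      simp only [List.get_eq_getElem, hu]
      rw [List.getElem_append_left (by simpa [List.length_append] using
        (show n < (x ++ y).length by simp [List.length_append]; omega)),
        List.getElem_append_left hnx]
    · have hwn := (hw n).2 hnx
      rw [hwn]
      simp only [List.get_eq_getElem, hu]
      rcases lt_or_ge (n - x.length) y.length with hm | hm
      · have h1 : n < (x ++ y).length := by simp [List.length_append]; omega
        rw [List.getElem_append_left h1, List.getElem_append_right hnx]
        congr 1
        exact Nat.mod_eq_of_lt hm
      · have h1 : (x ++ y).length ≤ n := by simp [List.length_append]; omega
        rw [List.getElem_append_right h1]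
        congr 1
        have h2 : n - x.length < 2 * y.length := by omega
        have : (n - x.length) % y.length = n - x.length - y.length := by
          rw [Nat.mod_eq_sub_mod hm, Nat.mod_eq_of_lt (by omega)]
        rw [this]
        simp [List.length_append]
        omega
  -- periodicity of w beyond x
  have hper : ∀ n, x.length ≤ n → w (n + y.length) = w n := by
    intro n hn
    have h1 := (hw n).2 hn
    have h2 := (hw (n + y.length)).2 (by omega)
    have hmod : (n + y.length - x.length) % y.length = (n - x.length) % y.length := by
      rw [show n + y.length - x.length = (n - x.length) + y.length by omega,
        Nat.add_mod_right]
    rw [h1, h2]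
    exact congrArg y.get (Fin.ext hmod)
  intro k
  induction k using Nat.strong_induction_on with
  | _ k ih =>
    intro hk1
    rcases lt_or_ge k (x.length + y.length) with hks | hks
    · -- small shift: use the Lyndon property directly
      have hkL : k < u.length := by omega
      have hlt := h.2 k hk1 hkL
      have hlex : List.Lex (· < ·) u (u.drop k) := hlt
      rcases lex_first_diff hlex with ⟨i, hagree, p, q, hp, hq, hpq⟩ | hpre
      · right
        have hqlt : i < (u.drop k).length := by
          by_contra hcon
          rw [List.getElem?_eq_none (by omega)] at hq
          exact nomatch hq
        have hik : i + k < u.length := by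
          rw [List.length_drop] at hqlt; omega
        refine ⟨i, ?_, ?_⟩
        · intro m hm
          have hm1 : m < u.length := by omega
          have hm2 : m + k < u.length := by omega
          have := hagree m hm
          rw [List.getElem?_drop] at this
          rw [List.getElem?_eq_getElem hm1, List.getElem?_eq_getElem (show k + m < u.length by omega)] at this
          have heq : u.get ⟨m, hm1⟩ = u.get ⟨k + m, by omega⟩ := Option.some.inj this
          show w m = w (m + k)
          rw [hwu m hm1, hwu (m + k) hm2]
          simpa [Nat.add_comm] using heq
        · have hi1 : i < u.length := by omega
          rw [List.getElem?_eq_getElem hi1] at hp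
          rw [List.getElem?_drop, List.getElem?_eq_getElem (show k + i < u.length by omega)] at hq
          have hpu : p = u.get ⟨i, hi1⟩ := (Option.some.inj hp).symm
          have hqu : q = u.get ⟨k + i, by omega⟩ := (Option.some.inj hq).symm
          show w i < w (i + k)
          rw [hwu i hi1, hwu (i + k) hik]
          rw [hpu, hqu] at hpq
          convert hpq using 3
          omega
      · -- prefix impossible: drop k is shorter
        have := hpre.length_le
        rw [List.length_drop] at this
        omega
    · -- large shift: reduce by a period
      have hshift : (fun n => w (n + k)) = fun n => w (n + (k - y.length)) := by
        funext n
        have : n + k = (n + (k - y.length)) + y.length := by omega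
        rw [this, hper _ (by omega)]
      rw [hshift]
      rcases Nat.eq_zero_or_pos (k - y.length) with h0 | hpos
      · left
        funext n
        rw [h0, Nat.add_zero]
      · exact ih (k - y.length) (by omega) hpos
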